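/- For every γ > 1/2, as λ → 2 from above one has the asymptotics G_γ(λ) = 2 B(γ − 1/2, 3/2) (λ − 2)^γ + O((λ − 2)^{γ + 1}). -/

import Mathlib

open Filter Asymptotics

/-- `G_γ(λ) = ∫₂^λ (E² − 4)^{1/2} (λ − E)^{γ − 3/2} dE`. -/
noncomputable def Ggamma (γ lam : ℝ) : ℝ :=
  ∫ E in (2 : ℝ)..lam, Real.sqrt (E ^ 2 - 4) * (lam - E) ^ (γ - 3 / 2)

/-- The Euler Beta function `B(x, y) = Γ(x)Γ(y)/Γ(x + y)`. -/
noncomputable def eulerBeta (x y : ℝ) : ℝ :=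
  Real.Gamma x * Real.Gamma y / Real.Gamma (x + y)

open MeasureTheory
lemma betaIntegrable {p q : ℝ} (hp : 0 < p) (hq : 0 < q) :
    IntervalIntegrable (fun x : ℝ => x ^ (p - 1) * (1 - x) ^ (q - 1)) volume 0 1 := by
  have h1 : IntervalIntegrable (fun x : ℝ => x ^ (p - 1) * (1 - x) ^ (q - 1))
      volume 0 (1/2) := by
    apply IntervalIntegrable.mul_continuousOn
    · exact intervalIntegral.intervalIntegrable_rpow' (by linarith)
    · apply ContinuousOn.rpow_const (by fun_prop)
      intro x hx
      rw [Set.uIcc_of_le (by norm_num)] at hx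
      exact Or.inl (by intro h; have := hx.2; norm_num at h; linarith)
  have h2 : IntervalIntegrable (fun x : ℝ => x ^ (p - 1) * (1 - x) ^ (q - 1))
      volume (1/2) 1 := by
    apply IntervalIntegrable.continuousOn_mul
    · have := (intervalIntegral.intervalIntegrable_rpow' (a := 0) (b := 1/2)
        (show (-1:ℝ) < q - 1 by linarith)).comp_sub_left 1
      norm_num at this
      exact this.symm
    · apply ContinuousOn.rpow_const (by fun_prop)
      intro x hx
      rw [Set.uIcc_of_le (by norm_num)] at hx
      exact Or.inl (by intro h; have := hx.1; norm_num at h; linarith)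
  exact h1.trans h2

lemma betaEval {p q : ℝ} (hp : 0 < p) (hq : 0 < q) :
    ∫ x in (0:ℝ)..1, x ^ (p - 1) * (1 - x) ^ (q - 1) = eulerBeta p q := by
  have h1 : Complex.betaIntegral p q
      = ((∫ x in (0:ℝ)..1, x ^ (p - 1) * (1 - x) ^ (q - 1) : ℝ) : ℂ) := by
    rw [Complex.betaIntegral, ← intervalIntegral.integral_ofReal]
    apply intervalIntegral.integral_congr
    intro x hx
    rw [Set.uIcc_of_le (by norm_num)] at hx
    simp only
    rw [Complex.ofReal_mul, Complex.ofReal_cpow hx.1,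
      Complex.ofReal_cpow (by linarith [hx.2] : (0:ℝ) ≤ 1 - x)]
    push_cast
    ring
  have h2 := Complex.Gamma_mul_Gamma_eq_betaIntegral
    (s := (p : ℂ)) (t := (q : ℂ)) (by simpa using hp) (by simpa using hq)
  rw [h1, ← Complex.ofReal_add, Complex.Gamma_ofReal, Complex.Gamma_ofReal,
    Complex.Gamma_ofReal, ← Complex.ofReal_mul, ← Complex.ofReal_mul] at h2
  have h3 : Real.Gamma p * Real.Gamma q
      = Real.Gamma (p + q) * ∫ x in (0:ℝ)..1, x ^ (p - 1) * (1 - x) ^ (q - 1) :=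
    mod_cast h2
  have hG : Real.Gamma (p + q) ≠ 0 := (Real.Gamma_pos_of_pos (by linarith)).ne'
  rw [eulerBeta, eq_div_iff hG, mul_comm _ (Real.Gamma (p+q)), ← h3]

lemma I1_integrable {p q a b : ℝ} (hp : 0 < p) (hq : 0 < q) (hab : a < b) :
    IntervalIntegrable (fun x => (x - a) ^ (p - 1) * (b - x) ^ (q - 1)) volume a b := by
  set m := (a + b) / 2 with hm
  have ham : a < m := by simp only [hm]; linarith
  have hmb : m < b := by simp only [hm]; linarith
  have h1 : IntervalIntegrable (fun x => (x - a) ^ (p - 1) * (b - x) ^ (q - 1)) volume a m := by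
    apply IntervalIntegrable.mul_continuousOn
    · have := (intervalIntegral.intervalIntegrable_rpow' (a := 0) (b := m - a)
        (show (-1:ℝ) < p - 1 by linarith)).comp_sub_right a
      simpa using this
    · apply ContinuousOn.rpow_const (by fun_prop)
      intro x hx
      rw [Set.uIcc_of_le ham.le] at hx
      refine Or.inl fun h => ?_
      have h' := sub_eq_zero.mp h
      have := hx.2
      simp only [hm] at this h' ⊢
      linarith
  have h2 : IntervalIntegrable (fun x => (x - a) ^ (p - 1) * (b - x) ^ (q - 1)) volume m b := by
    apply IntervalIntegrable.continuousOn_mul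
    · have := (intervalIntegral.intervalIntegrable_rpow' (a := 0) (b := b - m)
        (show (-1:ℝ) < q - 1 by linarith)).comp_sub_left b
      simpa using this.symm
    · apply ContinuousOn.rpow_const (by fun_prop)
      intro x hx
      rw [Set.uIcc_of_le hmb.le] at hx
      refine Or.inl fun h => ?_
      have h' := sub_eq_zero.mp h
      have := hx.1
      simp only [hm] at this h' ⊢
      linarith
  exact h1.trans h2

lemma I1_eval {p q a b : ℝ} (hp : 0 < p) (hq : 0 < q) (hab : a < b) :
    ∫ x in a..b, (x - a) ^ (p - 1) * (b - x) ^ (q - 1)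
      = (b - a) ^ (p + q - 1) * eulerBeta p q := by
  have hba : (0:ℝ) < b - a := sub_pos.2 hab
  have key := intervalIntegral.smul_integral_comp_add_mul
    (f := fun x => (x - a) ^ (p - 1) * (b - x) ^ (q - 1)) (a := 0) (b := 1)
    (b - a) a
  rw [mul_zero, mul_one, add_zero, add_sub_cancel] at key
  have inner : (∫ t in (0:ℝ)..1, (a + (b - a) * t - a) ^ (p - 1) * (b - (a + (b - a) * t)) ^ (q - 1))
      = (b - a) ^ (p - 1) * (b - a) ^ (q - 1) * eulerBeta p q := by
    rw [← betaEval hp hq, ← intervalIntegral.integral_const_mul]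
    apply intervalIntegral.integral_congr
    intro t ht
    rw [Set.uIcc_of_le (by norm_num)] at ht
    simp only
    have e1 : a + (b - a) * t - a = (b - a) * t := by ring
    have e2 : b - (a + (b - a) * t) = (b - a) * (1 - t) := by ring
    rw [e1, e2, Real.mul_rpow hba.le ht.1, Real.mul_rpow hba.le (by linarith [ht.2])]
    ring
  rw [inner] at key
  rw [← key, smul_eq_mul]
  rw [show p + q - 1 = 1 + ((p - 1) + (q - 1)) by ring, Real.rpow_add hba,
    Real.rpow_add hba, Real.rpow_one]
  ring

lemma eulerBeta_comm (x y : ℝ) : eulerBeta x y = eulerBeta y x := by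
  rw [eulerBeta, eulerBeta, mul_comm (Real.Gamma x), add_comm]

lemma eulerBeta_pos {x y : ℝ} (hx : 0 < x) (hy : 0 < y) : 0 < eulerBeta x y :=
  div_pos (mul_pos (Real.Gamma_pos_of_pos hx) (Real.Gamma_pos_of_pos hy))
    (Real.Gamma_pos_of_pos (by linarith))

/-- For every `γ > 1/2`, as `λ → 2⁺`,
`G_γ(λ) = 2 B(γ − 1/2, 3/2) (λ − 2)^γ + O((λ − 2)^{γ + 1})`. -/
theorem Ggamma_asymptotics_at_two (γ : ℝ) (hγ : 1 / 2 < γ) :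
    (fun lam : ℝ =>
        Ggamma γ lam - 2 * eulerBeta (γ - 1 / 2) (3 / 2) * (lam - 2) ^ γ)
      =O[nhdsWithin 2 (Set.Ioi 2)] (fun lam : ℝ => (lam - 2) ^ (γ + 1)) := by
  have hq : 0 < γ - 1/2 := by linarith
  rw [isBigO_iff]
  refine ⟨(1/4) * eulerBeta (5/2) (γ - 1/2), ?_⟩
  filter_upwards [self_mem_nhdsWithin] with lam hlam
  have h2l : (2:ℝ) < lam := hlam
  have hl2 : (0:ℝ) < lam - 2 := by linarith
  set q := γ - 1/2 with hqdef
  have h32 : IntervalIntegrable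
      (fun E => (E - 2) ^ ((3/2:ℝ) - 1) * (lam - E) ^ (q - 1)) volume 2 lam :=
    I1_integrable (by norm_num) hq h2l
  have h52 : IntervalIntegrable
      (fun E => (E - 2) ^ ((5/2:ℝ) - 1) * (lam - E) ^ (q - 1)) volume 2 lam :=
    I1_integrable (by norm_num) hq h2l
  have hcont : ContinuousOn (fun E : ℝ => Real.sqrt (E + 2)) (Set.uIcc 2 lam) := by
    fun_prop
  have hA : IntervalIntegrable
      (fun E => Real.sqrt (E + 2) * ((E - 2) ^ ((3/2:ℝ) - 1) * (lam - E) ^ (q - 1)))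
      volume 2 lam := h32.continuousOn_mul hcont
  have e1 : Ggamma γ lam = ∫ E in (2:ℝ)..lam,
      Real.sqrt (E + 2) * ((E - 2) ^ ((3/2:ℝ) - 1) * (lam - E) ^ (q - 1)) := by
    rw [Ggamma]
    apply intervalIntegral.integral_congr
    intro E hE
    rw [Set.uIcc_of_le h2l.le] at hE
    simp only
    rw [show E^2 - 4 = (E - 2) * (E + 2) by ring, Real.sqrt_mul (by linarith [hE.1]),
      Real.sqrt_eq_rpow (E - 2), show γ - 3/2 = q - 1 by rw [hqdef]; ring,
      show (1/2:ℝ) = (3/2:ℝ) - 1 by norm_num]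
    ring
  have e2 : (∫ E in (2:ℝ)..lam, (E - 2) ^ ((3/2:ℝ) - 1) * (lam - E) ^ (q - 1))
      = (lam - 2) ^ γ * eulerBeta (3/2) q := by
    rw [I1_eval (by norm_num) hq h2l, show (3/2:ℝ) + q - 1 = γ by rw [hqdef]; ring]
  have e3 : (∫ E in (2:ℝ)..lam, (E - 2) ^ ((5/2:ℝ) - 1) * (lam - E) ^ (q - 1))
      = (lam - 2) ^ (γ + 1) * eulerBeta (5/2) q := by
    rw [I1_eval (by norm_num) hq h2l, show (5/2:ℝ) + q - 1 = γ + 1 by rw [hqdef]; ring]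
  have e4 : Ggamma γ lam - 2 * eulerBeta q (3/2) * (lam - 2) ^ γ
      = ∫ E in (2:ℝ)..lam,
        (Real.sqrt (E + 2) - 2) * ((E - 2) ^ ((3/2:ℝ) - 1) * (lam - E) ^ (q - 1)) := by
    have hfe : (fun E => (Real.sqrt (E + 2) - 2)
          * ((E - 2) ^ ((3/2:ℝ) - 1) * (lam - E) ^ (q - 1)))
        = fun E => Real.sqrt (E + 2) * ((E - 2) ^ ((3/2:ℝ) - 1) * (lam - E) ^ (q - 1))
          - 2 * ((E - 2) ^ ((3/2:ℝ) - 1) * (lam - E) ^ (q - 1)) := by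
      funext E; ring
    rw [hfe, intervalIntegral.integral_sub hA (h32.const_mul 2),
      intervalIntegral.integral_const_mul, e2, e1, eulerBeta_comm]
    ring
  rw [e4]
  have hbound : ∀ E ∈ Set.Ioc (2:ℝ) lam,
      ‖(Real.sqrt (E + 2) - 2) * ((E - 2) ^ ((3/2:ℝ) - 1) * (lam - E) ^ (q - 1))‖
        ≤ (1/4) * ((E - 2) ^ ((5/2:ℝ) - 1) * (lam - E) ^ (q - 1)) := by
    intro E hE
    have hE2 : 0 < E - 2 := by linarith [hE.1]
    have hlE : 0 ≤ lam - E := by linarith [hE.2]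
    have hs : 2 ≤ Real.sqrt (E + 2) := by
      have h4 : Real.sqrt 4 ≤ Real.sqrt (E + 2) := Real.sqrt_le_sqrt (by linarith)
      have : Real.sqrt 4 = 2 := by
        rw [show (4:ℝ) = 2^2 by norm_num, Real.sqrt_sq (by norm_num : (0:ℝ) ≤ 2)]
      linarith
    have hs2 : Real.sqrt (E + 2) ≤ 2 + (E - 2)/4 := by
      rw [show 2 + (E - 2)/4 = Real.sqrt ((2 + (E - 2)/4)^2) from
        (Real.sqrt_sq (by linarith)).symm]
      exact Real.sqrt_le_sqrt (by nlinarith)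
    have hnn : 0 ≤ (E - 2) ^ ((3/2:ℝ) - 1) * (lam - E) ^ (q - 1) :=
      mul_nonneg (Real.rpow_nonneg hE2.le _) (Real.rpow_nonneg hlE _)
    rw [Real.norm_eq_abs, abs_of_nonneg (mul_nonneg (by linarith) hnn)]
    have key : (E - 2) ^ ((5/2:ℝ) - 1) = (E - 2) * (E - 2) ^ ((3/2:ℝ) - 1) := by
      rw [show (5/2:ℝ) - 1 = 1 + ((3/2:ℝ) - 1) by norm_num, Real.rpow_add hE2,
        Real.rpow_one]
    rw [key]
    calc (Real.sqrt (E + 2) - 2) * ((E - 2) ^ ((3/2:ℝ) - 1) * (lam - E) ^ (q - 1))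
        ≤ ((E - 2)/4) * ((E - 2) ^ ((3/2:ℝ) - 1) * (lam - E) ^ (q - 1)) :=
          mul_le_mul_of_nonneg_right (by linarith) hnn
      _ = 1/4 * ((E - 2) * (E - 2) ^ ((3/2:ℝ) - 1) * (lam - E) ^ (q - 1)) := by ring
  calc ‖∫ E in (2:ℝ)..lam,
          (Real.sqrt (E + 2) - 2) * ((E - 2) ^ ((3/2:ℝ) - 1) * (lam - E) ^ (q - 1))‖
      ≤ |∫ E in (2:ℝ)..lam, (1/4) * ((E - 2) ^ ((5/2:ℝ) - 1) * (lam - E) ^ (q - 1))| := by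
        apply intervalIntegral.norm_integral_le_abs_of_norm_le ?_ (h52.const_mul (1/4))
        rw [Set.uIoc_of_le h2l.le]
        exact (ae_restrict_iff' measurableSet_Ioc).2 (Filter.Eventually.of_forall hbound)
    _ ≤ 1/4 * eulerBeta (5/2) q * ‖(lam - 2) ^ (γ + 1)‖ := by
        have hB : 0 < eulerBeta (5/2) q := eulerBeta_pos (by norm_num) hq
        rw [intervalIntegral.integral_const_mul, e3, Real.norm_eq_abs,
          abs_of_nonneg (Real.rpow_nonneg hl2.le _),
          abs_of_nonneg (mul_nonneg (by norm_num)
            (mul_nonneg (Real.rpow_nonneg hl2.le _) hB.le))]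
        exact le_of_eq (by ring)
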